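/- arXiv:1408.5582 — 3 statements merged into one kernel-verified Lean document; each statement's English description precedes it below -/
import Mathlib

section
/- Let κ be an uncountable regular cardinal with κ^{<κ} = κ. The set of x ∈ 2^κ that are eventually constant with value 0 on a club (i.e., there is a club c ⊆ κ with x(i) = 0 for all i ∈ c) is non-meager in 2^κ; indeed it is not contained in any union of κ-many nowhere dense sets. -/
open Cardinal Set

/-- `c` is a club (closed unbounded set) in the ordinal `k`. -/
def IsClubIn (c : Set Ordinal) (k : Ordinal) : Prop :=
  c ⊆ Set.Iio k ∧
  (∀ l, l < k → Order.IsSuccLimit l → (∀ a < l, ∃ b ∈ c, a ≤ b ∧ b < l) → l ∈ c) ∧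
  (∀ a < k, ∃ b ∈ c, a ≤ b)

/-- The bounded topology on `2^κ`. -/
def boundedTop2 (κ : Cardinal) : TopologicalSpace (Ordinal → Bool) :=
  TopologicalSpace.generateFrom
    { U | ∃ a < κ.ord, ∃ s : Ordinal → Bool, U = { x | ∀ i < a, x i = s i } }

/-- Nowhere dense with respect to the bounded topology. -/
def Nwd2 (κ : Cardinal) (A : Set (Ordinal → Bool)) : Prop :=
  @interior _ (boundedTop2 κ) (@closure _ (boundedTop2 κ) A) = ∅

lemma exists_basic {κ : Cardinal} (hpos : 0 < κ.ord) {V : Set (Ordinal → Bool)}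
    (hV : (boundedTop2 κ).IsOpen V) {y : Ordinal → Bool} (hy : y ∈ V) :
    ∃ a < κ.ord, { x : Ordinal → Bool | ∀ i < a, x i = y i } ⊆ V := by
  have hV' : TopologicalSpace.GenerateOpen
      { U | ∃ a < κ.ord, ∃ s : Ordinal → Bool, U = { x | ∀ i < a, x i = s i } } V := hV
  clear hV
  induction hV' with
  | basic U hU =>
    obtain ⟨a, ha, s, rfl⟩ := hU
    exact ⟨a, ha, fun x hx i hi => (hx i hi).trans (hy i hi)⟩
  | univ => exact ⟨0, hpos, fun x _ => mem_univ x⟩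
  | inter U₁ U₂ h₁ h₂ ih₁ ih₂ =>
    obtain ⟨a₁, ha₁, hs₁⟩ := ih₁ hy.1
    obtain ⟨a₂, ha₂, hs₂⟩ := ih₂ hy.2
    refine ⟨max a₁ a₂, max_lt ha₁ ha₂, fun x hx => ⟨hs₁ fun i hi => hx i ?_, hs₂ fun i hi => hx i ?_⟩⟩
    · exact hi.trans_le (le_max_left _ _)
    · exact hi.trans_le (le_max_right _ _)
  | sUnion S hS ih =>
    obtain ⟨U, hU, hyU⟩ := hy
    obtain ⟨a, ha, hs⟩ := ih U hU hyU
    exact ⟨a, ha, hs.trans (subset_sUnion_of_mem hU)⟩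

lemma ext_lemma {κ : Cardinal} (hpos : 0 < κ.ord) {A : Set (Ordinal → Bool)}
    (hA : Nwd2 κ A) {a : Ordinal} (ha : a < κ.ord) (s : Ordinal → Bool) :
    ∃ (b : Ordinal) (t : Ordinal → Bool), a ≤ b ∧ b < κ.ord ∧ (∀ i < a, t i = s i) ∧
      ∀ x : Ordinal → Bool, (∀ i < b, x i = t i) → x ∉ A := by
  letI : TopologicalSpace (Ordinal → Bool) := boundedTop2 κ
  have hU : IsOpen { x : Ordinal → Bool | ∀ i < a, x i = s i } :=
    TopologicalSpace.isOpen_generateFrom_of_mem ⟨a, ha, s, rfl⟩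
  have hns : ¬ ({ x : Ordinal → Bool | ∀ i < a, x i = s i } ⊆ closure A) := by
    intro hsub
    have : s ∈ interior (closure A) :=
      (hU.subset_interior_iff.2 hsub) (fun i _ => rfl)
    rw [hA] at this
    exact this
  obtain ⟨y, hyU, hyA⟩ := not_subset.1 hns
  obtain ⟨b', hb', hsub⟩ := exists_basic hpos (isOpen_compl_iff.2 isClosed_closure) hyA
  refine ⟨max a b', y, le_max_left _ _, max_lt ha hb', fun i hi => hyU i hi, fun x hx hxA => ?_⟩
  exact hsub (fun i hi => hx i (hi.trans_le (le_max_right _ _))) (subset_closure hxA)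
open Ordinal in
lemma step_ex {κ : Cardinal} (hκ : Cardinal.aleph0 ≤ κ) {A : Set (Ordinal → Bool)}
    (hA : Nwd2 κ A) {α : Ordinal} (hα : α < κ.ord) (s : Ordinal → Bool) :
    ∃ q : Ordinal × (Ordinal → Bool), α < q.1 ∧ q.1 < κ.ord ∧
      (∀ i < α, q.2 i = s i) ∧ q.2 α = false ∧
      ∀ x : Ordinal → Bool, (∀ i < q.1, x i = q.2 i) → x ∉ A := by
  have hlim := Cardinal.isSuccLimit_ord hκ
  have hpos : (0 : Ordinal) < κ.ord := hlim.pos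
  have hsucc : Order.succ α < κ.ord := hlim.succ_lt hα
  obtain ⟨b, t, hab, hb, hts, havoid⟩ :=
    ext_lemma hpos hA hsucc (fun j => if j = α then false else s j)
  refine ⟨⟨b, t⟩, lt_of_lt_of_le (Order.lt_succ α) hab, hb, ?_, ?_, havoid⟩
  · intro i hi
    have := hts i (hi.trans (Order.lt_succ α))
    rwa [if_neg hi.ne] at this
  · have := hts α (Order.lt_succ α)
    rwa [if_pos rfl] at this

open Classical in
universe u in
noncomputable def seqF (κ : Cardinal.{u}) (X : Ordinal.{u} → Set (Ordinal.{u} → Bool))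
    (hκ : Cardinal.aleph0 ≤ κ) (hX : ∀ i, Nwd2 κ (X i)) : Ordinal → Ordinal × (Ordinal → Bool) :=
  fun i => Ordinal.limitRecOn i ⟨0, fun _ => false⟩
    (fun j p => if h : p.1 < κ.ord then Classical.choose (step_ex hκ (hX j) h p.2) else p)
    (fun o _ IH =>
      ⟨Ordinal.bsup.{u,u} o (fun j hj => (IH j hj).1),
       fun k => if (∃ j, ∃ hj : j < o, k < (IH j hj).1 ∧ (IH j hj).2 k = true) then true
         else false⟩)

section Seq

universe u
variable {κ : Cardinal.{u}} {X : Ordinal.{u} → Set (Ordinal.{u} → Bool)}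
  (hκ : Cardinal.aleph0 ≤ κ) (hX : ∀ i, Nwd2 κ (X i))

lemma seqF_zero : seqF κ X hκ hX 0 = ⟨0, fun _ => false⟩ := Ordinal.limitRecOn_zero ..

lemma seqF_succ (j : Ordinal) (h : (seqF κ X hκ hX j).1 < κ.ord) :
    seqF κ X hκ hX (Order.succ j) =
      Classical.choose (step_ex hκ (hX j) h (seqF κ X hκ hX j).2) := by
  unfold seqF
  rw [Ordinal.limitRecOn_succ]
  exact dif_pos h

open Classical in
lemma seqF_limit {o : Ordinal} (ho : Order.IsSuccLimit o) :
    seqF κ X hκ hX o =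
      ⟨Ordinal.bsup.{u,u} o (fun j _ => (seqF κ X hκ hX j).1),
       fun k => if (∃ j, ∃ _ : j < o, k < (seqF κ X hκ hX j).1 ∧
           (seqF κ X hκ hX j).2 k = true) then true else false⟩ := by
  unfold seqF
  rw [Ordinal.limitRecOn_limit _ _ _ _ ho]


lemma seqF_bound_mono (hreg : κ.IsRegular) : ∀ i < κ.ord, (seqF κ X hκ hX i).1 < κ.ord ∧
    ∀ j < i, (seqF κ X hκ hX j).1 < (seqF κ X hκ hX i).1 := by
  intro i
  induction i using Ordinal.induction with
  | h i IH =>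
  intro hi
  rcases Ordinal.zero_or_succ_or_isSuccLimit i with h0 | ⟨j, rfl⟩ | hlim
  · subst h0
    rw [seqF_zero]
    exact ⟨(Cardinal.isSuccLimit_ord hκ).pos, fun j hj => absurd hj (fun h => not_lt_zero h)⟩
  · have hj : j < κ.ord := (Order.lt_succ j).trans hi
    have hb := (IH j (Order.lt_succ j) hj).1
    have hs := Classical.choose_spec (step_ex hκ (hX j) hb (seqF κ X hκ hX j).2)
    have he := seqF_succ hκ hX j hb
    rw [he]
    refine ⟨hs.2.1, fun m hm => ?_⟩
    rcases (Order.lt_succ_iff.1 hm).lt_or_eq with hm' | rfl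
    · exact ((IH j (Order.lt_succ j) hj).2 m hm').trans hs.1
    · exact hs.1
  · have he := seqF_limit hκ hX hlim
    constructor
    · rw [he]
      refine Cardinal.bsup_lt_ord_of_isRegular.{u,u} hreg (Cardinal.lt_ord.1 hi) fun j hj => ?_
      exact (IH j hj (hj.trans hi)).1
    · intro j hj
      have h1 : Order.succ j < i := hlim.succ_lt hj
      have h2 : (seqF κ X hκ hX j).1 < (seqF κ X hκ hX (Order.succ j)).1 :=
        (IH _ h1 (h1.trans hi)).2 j (Order.lt_succ j)
      rw [he]
      exact h2.trans_le (Ordinal.le_bsup.{u,u} _ _ h1)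

lemma seqF_mono_le (hreg : κ.IsRegular) {i j : Ordinal} (hj : j < κ.ord) (hij : i ≤ j) :
    (seqF κ X hκ hX i).1 ≤ (seqF κ X hκ hX j).1 := by
  rcases hij.lt_or_eq with h | rfl
  · exact ((seqF_bound_mono hκ hX hreg j hj).2 i h).le
  · exact le_rfl

lemma seqF_le_self (hreg : κ.IsRegular) : ∀ i < κ.ord, i ≤ (seqF κ X hκ hX i).1 := by
  intro i
  induction i using Ordinal.induction with
  | h i IH =>
  intro hi
  rcases Ordinal.zero_or_succ_or_isSuccLimit i with h0 | ⟨j, rfl⟩ | hlim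
  · subst h0; exact zero_le
  · have hj : j < κ.ord := (Order.lt_succ j).trans hi
    have h1 : j ≤ (seqF κ X hκ hX j).1 := IH j (Order.lt_succ j) hj
    have h2 : (seqF κ X hκ hX j).1 < (seqF κ X hκ hX (Order.succ j)).1 :=
      (seqF_bound_mono hκ hX hreg _ hi).2 j (Order.lt_succ j)
    exact (Order.succ_le_succ h1).trans (Order.succ_le_of_lt h2)
  · rw [seqF_limit hκ hX hlim]
    by_contra h
    push_neg at h
    set b := Ordinal.bsup i (fun j _ => (seqF κ X hκ hX j).1) with hb
    have hsb : Order.succ b < i := hlim.succ_lt h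
    have h1 : Order.succ b ≤ (seqF κ X hκ hX (Order.succ b)).1 :=
      IH _ hsb (hsb.trans hi)
    have h2 : (seqF κ X hκ hX (Order.succ b)).1 ≤ b := Ordinal.le_bsup.{u,u} _ _ hsb
    exact absurd (Order.succ_le_iff.1 (h1.trans h2)) (lt_irrefl b)

lemma seqF_coherent (hreg : κ.IsRegular) : ∀ j < κ.ord, ∀ i ≤ j, ∀ k < (seqF κ X hκ hX i).1,
    (seqF κ X hκ hX j).2 k = (seqF κ X hκ hX i).2 k := by
  intro j
  induction j using Ordinal.induction with
  | h j IH =>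
  intro hj i hij k hk
  rcases hij.lt_or_eq with hij' | rfl
  swap
  · rfl
  rcases Ordinal.zero_or_succ_or_isSuccLimit j with h0 | ⟨m, rfl⟩ | hlim
  · exact absurd hij' (by subst h0; exact fun h => not_lt_zero h)
  · have hm : m < κ.ord := (Order.lt_succ m).trans hj
    have him : i ≤ m := Order.lt_succ_iff.1 hij'
    have hb := (seqF_bound_mono hκ hX hreg m hm).1
    have hs := Classical.choose_spec (step_ex hκ (hX m) hb (seqF κ X hκ hX m).2)
    rw [seqF_succ hκ hX m hb]
    have hkm : k < (seqF κ X hκ hX m).1 := hk.trans_le (seqF_mono_le hκ hX hreg hm him)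
    rw [hs.2.2.1 k hkm]
    exact IH m (Order.lt_succ m) hm i him k hk
  · classical
    have hfe : (seqF κ X hκ hX j).2 k =
        if (∃ m, ∃ _ : m < j, k < (seqF κ X hκ hX m).1 ∧ (seqF κ X hκ hX m).2 k = true)
        then true else false := by
      rw [seqF_limit hκ hX hlim]
    rw [hfe]
    by_cases hv : (seqF κ X hκ hX i).2 k = true
    · rw [if_pos ⟨i, hij', hk, hv⟩, hv]
    · have hne : ¬ (∃ m, ∃ _ : m < j, k < (seqF κ X hκ hX m).1 ∧
          (seqF κ X hκ hX m).2 k = true) := by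
        rintro ⟨m, hm, hkm, hvm⟩
        rcases le_total m i with hmi | him
        · exact hv ((IH i hij' (hij'.trans hj) m hmi k hkm).trans hvm)
        · exact hv ((IH m hm (hm.trans hj) i him k hk).symm.trans hvm)
      simp only [Bool.not_eq_true] at hv
      rw [if_neg hne, hv]

lemma seqF_mark (hreg : κ.IsRegular) {i : Ordinal} (hi : i < κ.ord) :
    (seqF κ X hκ hX (Order.succ i)).2 ((seqF κ X hκ hX i).1) = false ∧
    ∀ x : Ordinal → Bool, (∀ k < (seqF κ X hκ hX (Order.succ i)).1,
      x k = (seqF κ X hκ hX (Order.succ i)).2 k) → x ∉ X i := by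
  have hb := (seqF_bound_mono hκ hX hreg i hi).1
  have hs := Classical.choose_spec (step_ex hκ (hX i) hb (seqF κ X hκ hX i).2)
  rw [seqF_succ hκ hX i hb]
  exact ⟨hs.2.2.2.1, hs.2.2.2.2⟩

lemma x_eq (hreg : κ.IsRegular) {k j : Ordinal} (hj : j < κ.ord)
    (hk : k < (seqF κ X hκ hX j).1) :
    (seqF κ X hκ hX (Order.succ k)).2 k = (seqF κ X hκ hX j).2 k := by
  have hklt : k < κ.ord := hk.trans (seqF_bound_mono hκ hX hreg j hj).1
  have hsk : Order.succ k < κ.ord := (Cardinal.isSuccLimit_ord hκ).succ_lt hklt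
  rcases le_total j (Order.succ k) with h | h
  · exact seqF_coherent hκ hX hreg (Order.succ k) hsk j h k hk
  · have hkk : k < (seqF κ X hκ hX (Order.succ k)).1 :=
      lt_of_lt_of_le (Order.lt_succ k) (seqF_le_self hκ hX hreg _ hsk)
    exact (seqF_coherent hκ hX hreg j hj (Order.succ k) h k hkk).symm

end Seq

theorem zeroOnClub_not_meager' (κ : Cardinal) (hreg : κ.IsRegular)
    (hunc : Cardinal.aleph0 < κ)
    (X : Ordinal → Set (Ordinal → Bool)) (hX : ∀ i, Nwd2 κ (X i)) :
    ¬ ({ x : Ordinal → Bool | ∃ c, IsClubIn c κ.ord ∧ ∀ i ∈ c, x i = false } ⊆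
        ⋃ i ∈ Set.Iio κ.ord, X i) := by
  intro hsub
  have hκ : Cardinal.aleph0 ≤ κ := hunc.le
  set F := seqF κ X hκ hX with hF
  set x : Ordinal → Bool := fun k => (F (Order.succ k)).2 k with hx
  set c : Set Ordinal := (fun i => (F i).1) '' Set.Iio κ.ord with hc
  have hordlim := Cardinal.isSuccLimit_ord hκ
  have hxmem : x ∈ { x : Ordinal → Bool | ∃ c, IsClubIn c κ.ord ∧ ∀ i ∈ c, x i = false } := by
    refine ⟨c, ⟨?_, ?_, ?_⟩, ?_⟩
    · rintro _ ⟨j, hj, rfl⟩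
      exact (seqF_bound_mono hκ hX hreg j hj).1
    · -- closedness
      intro l hl hllim hcof
      set S : Set Ordinal := {i | i < κ.ord ∧ (F i).1 < l} with hS
      have hS0 : (0 : Ordinal) ∈ S := ⟨hordlim.pos, by rw [hF, seqF_zero]; exact hllim.pos⟩
      have hne : S.Nonempty := ⟨0, hS0⟩
      have hbdd : BddAbove S :=
        ⟨l, fun i hi => ((seqF_le_self hκ hX hreg i hi.1).trans_lt hi.2).le⟩
      set lam := sSup S with hlam
      have hlaml : lam ≤ l :=
        csSup_le hne fun i hi => ((seqF_le_self hκ hX hreg i hi.1).trans_lt hi.2).le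
      have hlamκ : lam < κ.ord := hlaml.trans_lt hl
      have hnotin : lam ∉ S := by
        intro hmem
        obtain ⟨b, hbc, hab, hbl⟩ :=
          hcof (Order.succ (F lam).1) (hllim.succ_lt hmem.2)
        obtain ⟨j, hj, rfl⟩ := hbc
        have hjle : j ≤ lam := le_csSup hbdd ⟨hj, hbl⟩
        have hmono : (F j).1 ≤ (F lam).1 := seqF_mono_le hκ hX hreg hlamκ hjle
        exact absurd (Order.succ_le_iff.1 (hab.trans hmono)) (lt_irrefl _)
      have hkey : ∀ i < lam, ∃ j ∈ S, i < j := by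
        intro i hi
        by_contra h
        push_neg at h
        exact absurd (csSup_le hne h) (not_le.2 hi)
      have hlim2 : Order.IsSuccLimit lam := by
        refine Ordinal.isSuccLimit_iff.2 ⟨fun h0 => hnotin (h0 ▸ hS0), Order.isSuccPrelimit_of_succ_lt fun a ha => ?_⟩
        obtain ⟨j, hjS, haj⟩ := hkey a ha
        have hjlam : j ≤ lam := le_csSup hbdd hjS
        have hjlt : j < lam := hjlam.lt_of_ne (fun h => hnotin (h ▸ hjS))
        exact lt_of_le_of_lt (Order.succ_le_of_lt haj) hjlt
      have hle : (F lam).1 ≤ l := by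
        rw [hF, seqF_limit hκ hX hlim2]
        refine Ordinal.bsup_le fun j hj => ?_
        obtain ⟨m, hmS, hjm⟩ := hkey j hj
        exact ((seqF_bound_mono hκ hX hreg m hmS.1).2 j hjm).le.trans hmS.2.le
      have hge : l ≤ (F lam).1 := le_of_not_gt fun hcon => hnotin ⟨hlamκ, hcon⟩
      exact ⟨lam, hlamκ, le_antisymm hle hge⟩
    · intro a ha
      exact ⟨(F a).1, ⟨a, ha, rfl⟩, seqF_le_self hκ hX hreg a ha⟩
    · rintro _ ⟨j, hj, rfl⟩
      have hsk : Order.succ j < κ.ord := hordlim.succ_lt hj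
      have hjlt : (F j).1 < (F (Order.succ j)).1 :=
        (seqF_bound_mono hκ hX hreg _ hsk).2 j (Order.lt_succ j)
      show (F (Order.succ (F j).1)).2 (F j).1 = false
      rw [x_eq hκ hX hreg hsk hjlt]
      exact (seqF_mark hκ hX hreg hj).1
  have := hsub hxmem
  simp only [Set.mem_iUnion, Set.mem_Iio] at this
  obtain ⟨i, hi, hxi⟩ := this
  have hsk : Order.succ i < κ.ord := hordlim.succ_lt hi
  refine (seqF_mark hκ hX hreg hi).2 x (fun k hk => ?_) hxi
  exact x_eq hκ hX hreg hsk hk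

/-- The set of `x ∈ 2^κ` vanishing on a club is not contained in any union of
`κ`-many nowhere dense sets, i.e. it is non-meager. -/
theorem zeroOnClub_not_meager (κ : Cardinal) (hreg : κ.IsRegular)
    (hunc : Cardinal.aleph0 < κ) (hlt : Cardinal.powerlt κ κ = κ)
    (X : Ordinal → Set (Ordinal → Bool)) (hX : ∀ i, Nwd2 κ (X i)) :
    ¬ ({ x : Ordinal → Bool | ∃ c, IsClubIn c κ.ord ∧ ∀ i ∈ c, x i = false } ⊆
        ⋃ i ∈ Set.Iio κ.ord, X i) := by
  exact zeroOnClub_not_meager' κ hreg hunc X hX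
end

section
/- Let κ be an uncountable regular cardinal with κ^{<κ} = κ. The club filter C = {x ∈ 2^κ : ∃ club c ⊆ κ, ∀ i ∈ c, x(i) = 1} does not have the Baire property in 2^κ, i.e., there is no open set O such that C △ O is meager (Halko–Shelah). -/
open Cardinal Set

/-- Meager: a union of `κ`-many nowhere dense sets. -/
def MeagerIn2 (κ : Cardinal) (A : Set (Ordinal → Bool)) : Prop :=
  ∃ X : Ordinal → Set (Ordinal → Bool),
    (∀ i, Nwd2 κ (X i)) ∧ A ⊆ ⋃ i ∈ Set.Iio κ.ord, X i

/-- The club filter `C = {x : ∃ club c, ∀ i ∈ c, x i = 1}` on `2^κ`. -/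
def clubFilterSet (κ : Cardinal) : Set (Ordinal → Bool) :=
  { x | ∃ c, IsClubIn c κ.ord ∧ ∀ i ∈ c, x i = true }

theorem clubs_intersect (κ : Cardinal) (hreg : κ.IsRegular) (hunc : Cardinal.aleph0 < κ)
    {c c' : Set Ordinal} (hc : IsClubIn c κ.ord) (hc' : IsClubIn c' κ.ord) :
    ∃ δ, δ ∈ c ∧ δ ∈ c' := by
  have hlim : Order.IsSuccLimit κ.ord := Cardinal.isSuccLimit_ord hreg.aleph0_le
  have h0 : 0 < κ.ord := hlim.pos
  -- choice functions
  have Hc : ∀ a : Ordinal, a < κ.ord → ∃ b, b ∈ c ∧ a ≤ b := fun a ha => by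
    obtain ⟨b, hb, hab⟩ := hc.2.2 a ha; exact ⟨b, hb, hab⟩
  have Hc' : ∀ a : Ordinal, a < κ.ord → ∃ b, b ∈ c' ∧ a ≤ b := fun a ha => by
    obtain ⟨b, hb, hab⟩ := hc'.2.2 a ha; exact ⟨b, hb, hab⟩
  have Hc2 : ∀ a : Ordinal, ∃ b, (b ∈ c ∧ b < κ.ord) ∧ (a < κ.ord → a ≤ b) := by
    intro a
    by_cases ha : a < κ.ord
    · obtain ⟨b, hb, hab⟩ := Hc a ha; exact ⟨b, ⟨hb, hc.1 hb⟩, fun _ => hab⟩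
    · obtain ⟨b, hb, _⟩ := Hc 0 h0; exact ⟨b, ⟨hb, hc.1 hb⟩, fun h => absurd h ha⟩
  have Hc2' : ∀ a : Ordinal, ∃ b, (b ∈ c' ∧ b < κ.ord) ∧ (a < κ.ord → a ≤ b) := by
    intro a
    by_cases ha : a < κ.ord
    · obtain ⟨b, hb, hab⟩ := Hc' a ha; exact ⟨b, ⟨hb, hc'.1 hb⟩, fun _ => hab⟩
    · obtain ⟨b, hb, _⟩ := Hc' 0 h0; exact ⟨b, ⟨hb, hc'.1 hb⟩, fun h => absurd h ha⟩
  choose g hg1 hg2 using Hc2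
  choose g' hg1' hg2' using Hc2'
  -- the alternating sequence: even indices in c, odd in c'
  let f : ℕ → Ordinal := fun n => Nat.rec (g 0) (fun n fn => if n % 2 = 0 then g' (fn + 1) else g (fn + 1)) n
  have hflt : ∀ n, f n < κ.ord := by
    intro n
    induction n with
    | zero => exact (hg1 0).2
    | succ n ih =>
      show (if n % 2 = 0 then g' (f n + 1) else g (f n + 1)) < κ.ord
      split
      · exact (hg1' (f n + 1)).2
      · exact (hg1 (f n + 1)).2
  have hfmono : ∀ n, f n < f (n + 1) := by
    intro n
    have h1 : f n + 1 < κ.ord := hlim.succ_lt (hflt n)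
    show f n < (if n % 2 = 0 then g' (f n + 1) else g (f n + 1))
    split
    · exact lt_of_lt_of_le (lt_add_one _) (hg2' _ h1)
    · exact lt_of_lt_of_le (lt_add_one _) (hg2 _ h1)
  have hfmono' : StrictMono f := strictMono_nat_of_lt_succ hfmono
  have hmemc : ∀ n, f (2 * n) ∈ c := by
    intro n
    cases n with
    | zero => exact (hg1 0).1
    | succ n =>
      show (if (2 * (n+1) - 1) % 2 = 0 then g' _ else g _) ∈ c
      have : (2 * (n + 1) - 1) % 2 = 1 := by omega
      rw [this]
      simp only [one_ne_zero, if_false]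
      exact (hg1 _).1
  have hmemc' : ∀ n, f (2 * n + 1) ∈ c' := by
    intro n
    show (if (2 * n) % 2 = 0 then g' _ else g _) ∈ c'
    have : (2 * n) % 2 = 0 := by omega
    rw [this]
    simp only [if_true]
    exact (hg1' _).1
  set δ := ⨆ n, f n with hδ
  have hle : ∀ n, f n ≤ δ := fun n => Ordinal.le_iSup f n
  have hδlt : δ < κ.ord := by
    rw [hδ]
    refine Ordinal.iSup_lt_ord_lift ?_ hflt
    rw [hreg.cof_eq]
    simpa using hunc
  have hlt_iff : ∀ a, a < δ → ∃ n, a < f n := by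
    intro a ha
    by_contra hcon
    push_neg at hcon
    exact absurd (Ordinal.iSup_le hcon) (not_le.2 ha)
  have hfltδ : ∀ n, f n < δ := fun n => (hfmono n).trans_le (hle (n + 1))
  have hδlim : Order.IsSuccLimit δ := by
    refine Ordinal.isSuccLimit_iff.2 ⟨fun h => ?_, Order.isSuccPrelimit_iff_succ_lt.2 fun a ha => ?_⟩
    · exact absurd (h ▸ hfltδ 0) (not_lt_zero' (a := _))
    · obtain ⟨n, hn⟩ := hlt_iff a ha
      exact lt_of_le_of_lt (Order.succ_le_of_lt hn) (hfltδ n)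
  have happroach : ∀ a < δ, (∃ b ∈ c, a ≤ b ∧ b < δ) ∧ (∃ b ∈ c', a ≤ b ∧ b < δ) := by
    intro a ha
    obtain ⟨n, hn⟩ := hlt_iff a ha
    constructor
    · exact ⟨f (2 * (n + 1)), hmemc (n + 1), (hn.trans_le (hfmono'.monotone (show n ≤ 2 * (n + 1) by omega))).le, hfltδ (2 * (n + 1))⟩
    · exact ⟨f (2 * n + 1), hmemc' n, (hn.trans_le (hfmono'.monotone (show n ≤ 2 * n + 1 by omega))).le, hfltδ (2 * n + 1)⟩
  exact ⟨δ, hc.2.1 δ hδlt hδlim (fun a ha => (happroach a ha).1),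
    hc'.2.1 δ hδlt hδlim (fun a ha => (happroach a ha).2)⟩

theorem open_contains_basic (κ : Cardinal) (h0 : 0 < κ.ord) {V : Set (Ordinal → Bool)}
    (hV : TopologicalSpace.GenerateOpen
      { U | ∃ a < κ.ord, ∃ s : Ordinal → Bool, U = { x | ∀ i < a, x i = s i } } V) :
    ∀ y ∈ V, ∃ a < κ.ord, {x : Ordinal → Bool | ∀ i < a, x i = y i} ⊆ V := by
  induction hV with
  | basic U hU =>
    rintro y hy
    obtain ⟨a, ha, s, rfl⟩ := hU
    exact ⟨a, ha, fun x hx i hi => (hx i hi).trans (hy i hi)⟩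
  | univ => exact fun y _ => ⟨0, h0, fun x _ => trivial⟩
  | inter U W hU hW ihU ihW =>
    intro y hy
    obtain ⟨a, ha, hsa⟩ := ihU y hy.1
    obtain ⟨b, hb, hsb⟩ := ihW y hy.2
    refine ⟨max a b, max_lt ha hb, fun x hx => ⟨hsa fun i hi => hx i (hi.trans_le (le_max_left a b)),
      hsb fun i hi => hx i (hi.trans_le (le_max_right a b))⟩⟩
  | sUnion S _ ih =>
    rintro y ⟨U, hU, hyU⟩
    obtain ⟨a, ha, h⟩ := ih U hU y hyU
    exact ⟨a, ha, h.trans (subset_sUnion_of_mem hU)⟩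

theorem ext_avoid (κ : Cardinal) (h0 : 0 < κ.ord) {X : Set (Ordinal → Bool)} (hX : Nwd2 κ X)
    {a : Ordinal} (ha : a < κ.ord) (s : Ordinal → Bool) :
    ∃ a', a ≤ a' ∧ a' < κ.ord ∧ ∃ s' : Ordinal → Bool, (∀ i < a, s' i = s i) ∧
      ∀ x : Ordinal → Bool, (∀ i < a', x i = s' i) → x ∉ X := by
  letI : TopologicalSpace (Ordinal → Bool) := boundedTop2 κ
  have hXint : interior (closure X) = ∅ := hX
  have hUopen : IsOpen {x : Ordinal → Bool | ∀ i < a, x i = s i} :=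
    TopologicalSpace.GenerateOpen.basic _ ⟨a, ha, s, rfl⟩
  have hnot : ¬ {x : Ordinal → Bool | ∀ i < a, x i = s i} ⊆ closure X := by
    intro hsub
    have hs : s ∈ interior (closure X) :=
      interior_maximal hsub hUopen (fun i _ => rfl)
    rw [hXint] at hs
    exact hs
  obtain ⟨y, hyU, hyX⟩ := not_subset.1 hnot
  rw [mem_closure_iff] at hyX
  push_neg at hyX
  obtain ⟨o, ho, hyo, hoX⟩ := hyX
  obtain ⟨a'', ha'', hsub⟩ := open_contains_basic κ h0 ho y hyo
  refine ⟨max a a'', le_max_left _ _, max_lt ha ha'', y, fun i hi => hyU i hi, fun x hx hxX => ?_⟩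
  have : x ∈ o := hsub (fun i hi => hx i (hi.trans_le (le_max_right a a'')))
  rw [← Set.not_nonempty_iff_eq_empty] at hoX
  exact hoX ⟨x, this, hxX⟩

open Classical in
noncomputable def buildSeq (b : Bool) (A : Ordinal → Ordinal → (Ordinal → Bool) → Ordinal)
    (S : Ordinal → Ordinal → (Ordinal → Bool) → (Ordinal → Bool))
    (a0 : Ordinal) (s0 : Ordinal → Bool) : Ordinal → Ordinal × (Ordinal → Bool) :=
  fun i => Ordinal.limitRecOn i ((a0, s0) : Ordinal × (Ordinal → Bool))
    (fun o q => (A o (q.1 + 1) (fun j => if j = q.1 then b else q.2 j),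
                 S o (q.1 + 1) (fun j => if j = q.1 then b else q.2 j)))
    (fun o _ ih => (Ordinal.bsup o (fun a ha => (ih a ha).1),
      fun k => if h : ∃ j : Set.Iio o, k < (ih j.1 j.2).1 then (ih h.choose.1 h.choose.2).2 k else b))

open Classical in
theorem buildSeq_zero (b A S a0 s0) : buildSeq b A S a0 s0 0 = (a0, s0) :=
  Ordinal.limitRecOn_zero _ _ _

open Classical in
theorem buildSeq_succ (b A S a0 s0) (o : Ordinal) :
    buildSeq b A S a0 s0 (Order.succ o) =
      ((fun q => (A o (q.1 + 1) (fun j => if j = q.1 then b else q.2 j),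
                 S o (q.1 + 1) (fun j => if j = q.1 then b else q.2 j))) (buildSeq b A S a0 s0 o)) :=
  Ordinal.limitRecOn_succ _ _ _ _

open Classical in
theorem buildSeq_limit (b A S a0 s0) (o : Ordinal) (ho : Order.IsSuccLimit o) :
    buildSeq b A S a0 s0 o =
      (Ordinal.bsup o (fun a _ => (buildSeq b A S a0 s0 a).1),
        fun k => if h : ∃ j : Set.Iio o, k < (buildSeq b A S a0 s0 j.1).1 then
          (buildSeq b A S a0 s0 h.choose.1).2 k else b) :=
  Ordinal.limitRecOn_limit _ _ _ _ ho

theorem build (κ : Cardinal) (hreg : κ.IsRegular) (b : Bool)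
    (X : Ordinal → Set (Ordinal → Bool)) (hX : ∀ i, Nwd2 κ (X i))
    (a0 : Ordinal) (ha0 : a0 < κ.ord) (s0 : Ordinal → Bool) :
    ∃ x : Ordinal → Bool, (∀ i < a0, x i = s0 i) ∧ (∀ i < κ.ord, x ∉ X i) ∧
      ∃ c, IsClubIn c κ.ord ∧ ∀ i ∈ c, x i = b := by
  have hlim : Order.IsSuccLimit κ.ord := Cardinal.isSuccLimit_ord hreg.aleph0_le
  have h0 : 0 < κ.ord := hlim.pos
  -- total choice functions for the nwd-avoiding extension
  have H : ∀ (i a : Ordinal) (s : Ordinal → Bool), ∃ (a' : Ordinal) (s' : Ordinal → Bool),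
      a ≤ a' ∧ (∀ j < a, s' j = s j) ∧
      (a < κ.ord → a' < κ.ord ∧ ∀ x : Ordinal → Bool, (∀ j < a', x j = s' j) → x ∉ X i) := by
    intro i a s
    by_cases ha : a < κ.ord
    · obtain ⟨a', hle, hlt, s', hagr, havd⟩ := ext_avoid κ h0 (hX i) ha s
      exact ⟨a', s', hle, hagr, fun _ => ⟨hlt, havd⟩⟩
    · exact ⟨a, s, le_rfl, fun _ _ => rfl, fun h => absurd h ha⟩
  choose A S hAle hSagr hgood using H
  set P : Ordinal → Ordinal × (Ordinal → Bool) := buildSeq b A S a0 s0 with hP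
  -- successor step facts
  have hz : P 0 = (a0, s0) := buildSeq_zero b A S a0 s0
  have hs1 : ∀ o, (P o).1 < (P (Order.succ o)).1 := by
    intro o
    have h := buildSeq_succ b A S a0 s0 o
    rw [← hP] at h
    rw [h]
    exact lt_of_lt_of_le (lt_add_one _) (hAle o _ _)
  have hs2 : ∀ o k, k < (P o).1 → (P (Order.succ o)).2 k = (P o).2 k := by
    intro o k hk
    have h := buildSeq_succ b A S a0 s0 o
    rw [← hP] at h
    rw [h]
    exact (hSagr o ((P o).1 + 1) (fun j => if j = (P o).1 then b else (P o).2 j) k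
      (hk.trans (lt_add_one _))).trans (if_neg hk.ne)
  have hs3 : ∀ o, (P (Order.succ o)).2 (P o).1 = b := by
    intro o
    have h := buildSeq_succ b A S a0 s0 o
    rw [← hP] at h
    rw [h]
    exact (hSagr o ((P o).1 + 1) (fun j => if j = (P o).1 then b else (P o).2 j) (P o).1
      (lt_add_one _)).trans (if_pos rfl)
  have hs4 : ∀ o, (P o).1 < κ.ord → (P (Order.succ o)).1 < κ.ord ∧
      ∀ x : Ordinal → Bool, (∀ j < (P (Order.succ o)).1, x j = (P (Order.succ o)).2 j) →
        x ∉ X o := by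
    intro o ho
    have h := buildSeq_succ b A S a0 s0 o
    rw [← hP] at h
    rw [h]
    exact hgood o ((P o).1 + 1) _ (hlim.succ_lt ho)
  -- limit facts
  have hl1 : ∀ o, Order.IsSuccLimit o → (P o).1 = Ordinal.bsup o (fun a _ => (P a).1) := by
    intro o ho
    have h := buildSeq_limit b A S a0 s0 o ho
    rw [← hP] at h
    rw [h]
  have hl2 : ∀ o, Order.IsSuccLimit o → ∀ k, (∃ j : Set.Iio o, k < (P j.1).1) →
      ∃ jj : Set.Iio o, k < (P jj.1).1 ∧ (P o).2 k = (P jj.1).2 k := by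
    intro o ho k hex
    have h := buildSeq_limit b A S a0 s0 o ho
    rw [← hP] at h
    refine ⟨hex.choose, hex.choose_spec, ?_⟩
    rw [h]
    simp only
    rw [dif_pos hex]
  -- coherence
  have coh : ∀ j i, i ≤ j → (P i).1 ≤ (P j).1 ∧ ∀ k < (P i).1, (P j).2 k = (P i).2 k := by
    intro j
    induction j using Ordinal.limitRecOn with
    | zero =>
      intro i hi
      rw [nonpos_iff_eq_zero] at hi
      subst hi
      exact ⟨le_rfl, fun _ _ => rfl⟩
    | add_one o ih =>
      intro i hi
      rcases eq_or_lt_of_le hi with rfl | hlt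
      · exact ⟨le_rfl, fun _ _ => rfl⟩
      · have hio : i ≤ o := Order.lt_succ_iff.1 hlt
        obtain ⟨h1, h2⟩ := ih i hio
        exact ⟨h1.trans (hs1 o).le,
          fun k hk => (hs2 o k (hk.trans_le h1)).trans (h2 k hk)⟩
    | limit o ho ih =>
      intro i hi
      rcases eq_or_lt_of_le hi with rfl | hio
      · exact ⟨le_rfl, fun _ _ => rfl⟩
      constructor
      · rw [hl1 o ho]
        exact Ordinal.le_bsup (fun a _ => (P a).1) i hio
      · intro k hk
        obtain ⟨jj, hjj1, hjj2⟩ := hl2 o ho k ⟨⟨i, hio⟩, hk⟩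
        rw [hjj2]
        rcases le_total i jj.1 with hij | hij
        · exact (ih jj.1 jj.2 i hij).2 k hk
        · exact ((ih i hio jj.1 hij).2 k hjj1).symm
  -- bound below κ.ord
  have bound : ∀ i, i < κ.ord → (P i).1 < κ.ord := by
    intro i
    induction i using Ordinal.limitRecOn with
    | zero => intro _; rw [hz]; exact ha0
    | add_one o ih =>
      intro h
      have ho : o < κ.ord := (Order.lt_succ o).trans h
      exact (hs4 o (ih ho)).1
    | limit o ho ih =>
      intro h
      rw [hl1 o ho]
      refine Ordinal.bsup_lt_ord ?_ (fun a ha => ih a ha (ha.trans h))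
      rw [hreg.cof_eq]
      exact Cardinal.lt_ord.1 h
  -- i ≤ (P i).1
  have idx_le : ∀ i, i ≤ (P i).1 := by
    intro i
    induction i using Ordinal.limitRecOn with
    | zero => exact zero_le (a := _)
    | add_one o ih => exact Order.succ_le_of_lt (lt_of_le_of_lt ih (hs1 o))
    | limit o ho ih =>
      by_contra hcon
      push_neg at hcon
      have h1 : (P o).1 < o := hcon
      have h2 : Order.succ (P o).1 ≤ o := Order.succ_le_of_lt h1
      have h3 := (coh o (Order.succ (P o).1) h2).1
      have h4 := lt_of_le_of_lt (ih (P o).1 h1) (hs1 (P o).1)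
      exact absurd (h4.trans_le h3) (lt_irrefl _)
  -- the generic point
  set x : Ordinal → Bool := fun k => (P (Order.succ k)).2 k with hx
  have hxk : ∀ i k, k < (P i).1 → x k = (P i).2 k := by
    intro i k hk
    have hk1 : k < (P (Order.succ k)).1 := lt_of_le_of_lt (idx_le k) (hs1 k)
    rcases le_total i (Order.succ k) with h | h
    · exact (coh (Order.succ k) i h).2 k hk
    · exact ((coh i (Order.succ k) h).2 k hk1).symm
  refine ⟨x, ?_, ?_, ?_⟩
  · intro i hi
    have : i < (P 0).1 := by rw [hz]; exact hi
    rw [hxk 0 i this, hz]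
  · intro i hi h
    exact (hs4 i (bound i hi)).2 x (fun j hj => hxk (Order.succ i) j hj) h
  · refine ⟨(fun i => (P i).1) '' (Set.Iio κ.ord), ⟨?_, ?_, ?_⟩, ?_⟩
    · rintro _ ⟨i, hi, rfl⟩
      exact bound i hi
    · -- closedness
      rintro l hl hllim happ
      obtain ⟨lam, hlmem, hlmin⟩ := (wellFounded_lt (α := Ordinal)).has_min
        {i | l ≤ (P i).1} ⟨l, idx_le l⟩
      have hlmem' : l ≤ (P lam).1 := hlmem
      have hmin' : ∀ μ, μ < lam → (P μ).1 < l := by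
        intro μ hμ
        by_contra hc
        push_neg at hc
        exact hlmin μ hc hμ
      have hlamle : lam ≤ l := not_lt.1 (fun hc => hlmin l (idx_le l) hc)
      have key : (P lam).1 = l := by
        rcases Ordinal.zero_or_succ_or_isSuccLimit lam with h0' | ⟨μ, hμ⟩ | hlimlam
        · exfalso
          obtain ⟨b0, ⟨i0, _, rfl⟩, _, hb0l⟩ := happ 0 hllim.pos
          have : (P 0).1 ≤ (P i0).1 := (coh i0 0 (zero_le (a := i0))).1
          have : (P 0).1 < l := lt_of_le_of_lt this hb0l
          subst h0'
          exact absurd (hlmem'.trans_lt ‹(P 0).1 < l›) (lt_irrefl _)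
        · exfalso
          subst hμ
          have hμlt : (P μ).1 < l := hmin' μ (Order.lt_succ μ)
          have hsucclt : Order.succ (P μ).1 < l := hllim.succ_lt hμlt
          obtain ⟨b1, ⟨j, _, rfl⟩, hj1, hj2⟩ := happ (Order.succ (P μ).1) hsucclt
          have hμj : μ < j := by
            by_contra hc
            push_neg at hc
            have := (coh μ j hc).1
            exact absurd (lt_of_lt_of_le (Order.succ_le_iff.1 hj1) this)
              (lt_irrefl _)
          have : (P (Order.succ μ)).1 ≤ (P j).1 := (coh j (Order.succ μ) (Order.succ_le_of_lt hμj)).1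
          exact absurd (hlmem'.trans this) (not_le.2 hj2)
        · apply le_antisymm
          · rw [hl1 lam hlimlam]
            exact Ordinal.bsup_le (fun μ hμ => (hmin' μ hμ).le)
          · exact hlmem'
      exact ⟨lam, lt_of_le_of_lt hlamle hl, key⟩
    · -- unboundedness
      intro a ha
      exact ⟨(P a).1, ⟨a, ha, rfl⟩, idx_le a⟩
    · -- value b on the club
      rintro _ ⟨i, _, rfl⟩
      rw [hxk (Order.succ i) (P i).1 (hs1 i)]
      exact hs3 i

/-- Halko–Shelah: the club filter does not have the Baire property in `2^κ`:
there is no open set `O` with `C △ O` meager. -/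
theorem clubFilter_no_baireProperty (κ : Cardinal) (hreg : κ.IsRegular)
    (hunc : Cardinal.aleph0 < κ) (hlt : Cardinal.powerlt κ κ = κ) :
    ¬ ∃ O : Set (Ordinal → Bool), @IsOpen _ (boundedTop2 κ) O ∧
        MeagerIn2 κ (symmDiff (clubFilterSet κ) O) := by
  rintro ⟨O, hO, X, hX, hsub⟩
  have hlim : Order.IsSuccLimit κ.ord := Cardinal.isSuccLimit_ord hreg.aleph0_le
  have h0 : 0 < κ.ord := hlim.pos
  have contra : ∀ x : Ordinal → Bool, x ∈ symmDiff (clubFilterSet κ) O →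
      (∀ i < κ.ord, x ∉ X i) → False := by
    intro x hmem havoid
    have := hsub hmem
    simp only [Set.mem_iUnion] at this
    obtain ⟨i, hi, hxX⟩ := this
    exact havoid i hi hxX
  by_cases hOne : O.Nonempty
  · obtain ⟨y, hy⟩ := hOne
    have hO' : TopologicalSpace.GenerateOpen
      { U | ∃ a < κ.ord, ∃ s : Ordinal → Bool, U = { x | ∀ i < a, x i = s i } } O := hO
    obtain ⟨a, ha, hbasic⟩ := open_contains_basic κ h0 hO' y hy
    obtain ⟨x, hx0, hxavoid, c, hc, hcb⟩ := build κ hreg false X hX a ha y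
    have hxO : x ∈ O := hbasic hx0
    have hxC : x ∉ clubFilterSet κ := by
      rintro ⟨c', hc', hcb'⟩
      obtain ⟨δ, hδc, hδc'⟩ := clubs_intersect κ hreg hunc hc hc'
      have h1 := hcb δ hδc
      have h2 := hcb' δ hδc'
      rw [h1] at h2
      exact Bool.false_ne_true h2
    exact contra x (Set.mem_symmDiff.2 (Or.inr ⟨hxO, hxC⟩)) hxavoid
  · have hOe : O = ∅ := Set.not_nonempty_iff_eq_empty.1 hOne
    obtain ⟨x, _, hxavoid, c, hc, hcb⟩ := build κ hreg true X hX 0 h0 (fun _ => true)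
    have hxC : x ∈ clubFilterSet κ := ⟨c, hc, hcb⟩
    have hxO : x ∉ O := by rw [hOe]; exact Set.notMem_empty x
    exact contra x (Set.mem_symmDiff.2 (Or.inl ⟨hxC, hxO⟩)) hxavoid
end

section
/- Let κ be an uncountable regular cardinal, and fix a stationary, co-stationary set S ⊆ κ. For i < κ, let A_i = {x ∈ κ_↑^κ : ∀ j > i, x(j) ∈ S}, and A = ⋃_{i<κ} A_i. Then: (a) for every κ-Laver tree T and every i < κ there is a κ-Laver tree T' ⊆ T with [T'] ∩ A_i = ∅; but (b) every κ-Laver tree T contains a branch belonging to A. Hence the κ-ideal generated by the Laver-null sets is strictly larger than the family of Laver-null sets. -/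
open Cardinal Set

structure PreSeq where
  len : Ordinal
  val : Ordinal → Ordinal

def PreSeq.Canonical (s : PreSeq) : Prop := ∀ i, s.len ≤ i → s.val i = 0

def PreSeq.Ext (s t : PreSeq) : Prop := s.len ≤ t.len ∧ ∀ i < s.len, s.val i = t.val i

def PreSeq.Increasing (s : PreSeq) : Prop := ∀ i j, i < j → j < s.len → s.val i < s.val j

noncomputable def restrictFn (x : Ordinal → Ordinal) (a : Ordinal) : PreSeq :=
  ⟨a, fun i => if i < a then x i else 0⟩

noncomputable def PreSeq.snoc (s : PreSeq) (α : Ordinal) : PreSeq :=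
  ⟨s.len + 1, fun i => if i < s.len then s.val i else if i = s.len then α else 0⟩

/-- `S` is stationary in `k`: it meets every club of `k`. -/
def IsStatIn (S : Set Ordinal) (k : Ordinal) : Prop :=
  ∀ c, IsClubIn c k → (c ∩ S).Nonempty

/-- κ-Laver tree (with closure under unions of increasing chains of length `< κ`). -/
def IsLaverTree (κ : Cardinal) (T : Set PreSeq) : Prop :=
  T.Nonempty ∧
  (∀ s ∈ T, s.len < κ.ord ∧ s.Canonical ∧ s.Increasing) ∧
  (∀ s ∈ T, ∀ a ≤ s.len, restrictFn s.val a ∈ T) ∧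
  (∀ x : Ordinal → Ordinal, ∀ l, l < κ.ord → Order.IsSuccLimit l →
    (∀ a < l, restrictFn x a ∈ T) → restrictFn x l ∈ T) ∧
  (∃ st ∈ T, (∀ t ∈ T, PreSeq.Ext st t ∨ PreSeq.Ext t st) ∧
    (∀ t ∈ T, PreSeq.Ext st t →
      ∃ c, IsClubIn c κ.ord ∧ ∀ α ∈ c, PreSeq.snoc t α ∈ T))

def Branches (κ : Cardinal) (T : Set PreSeq) : Set (Ordinal → Ordinal) :=
  { x | ∀ a < κ.ord, restrictFn x a ∈ T }

/-- `x` is strictly increasing below `κ`. -/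
def IncrBelow (κ : Cardinal) (x : Ordinal → Ordinal) : Prop :=
  ∀ i j, i < j → j < κ.ord → x i < x j

/-- The sets `A_i = {x ∈ κ_↑^κ : ∀ j > i, x j ∈ S}`. -/
def ASet (κ : Cardinal) (S : Set Ordinal) (i : Ordinal) : Set (Ordinal → Ordinal) :=
  { x | IncrBelow κ x ∧ ∀ j, i < j → j < κ.ord → x j ∈ S }


-- ===== auxiliary lemmas =====

theorem PreSeq.ext' {s t : PreSeq} (h1 : s.len = t.len) (h2 : ∀ i, s.val i = t.val i) : s = t := by
  cases s; cases t; simp only [PreSeq.mk.injEq]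
  exact ⟨h1, funext h2⟩

@[simp] theorem restrict_len (x : Ordinal → Ordinal) (a : Ordinal) : (restrictFn x a).len = a := rfl

theorem restrict_val_lt {x : Ordinal → Ordinal} {a i : Ordinal} (h : i < a) :
    (restrictFn x a).val i = x i := if_pos h

theorem ext_refl (s : PreSeq) : PreSeq.Ext s s := ⟨le_rfl, fun _ _ => rfl⟩

theorem ext_trans {s t u : PreSeq} (h1 : PreSeq.Ext s t) (h2 : PreSeq.Ext t u) : PreSeq.Ext s u :=
  ⟨h1.1.trans h2.1, fun i hi => (h1.2 i hi).trans (h2.2 i (hi.trans_le h1.1))⟩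

theorem ext_restrict_self {x : Ordinal → Ordinal} {a b : Ordinal} (h : a ≤ b) :
    PreSeq.Ext (restrictFn x a) (restrictFn x b) := by
  refine ⟨h, fun i hi => ?_⟩
  have hi' : i < a := hi
  rw [restrict_val_lt hi', restrict_val_lt (lt_of_lt_of_le hi' h)]

theorem restrict_restrict {s : PreSeq} {a : Ordinal} (h : a ≤ s.len) :
    PreSeq.Ext (restrictFn s.val a) s := by
  refine ⟨h, fun i hi => ?_⟩
  exact restrict_val_lt (show i < a from hi)

theorem lt_succ' (c : Ordinal) : c < c + 1 := by
  rw [Ordinal.add_one_eq_succ]; exact Order.lt_succ c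

theorem lt_succ_iff' {a b : Ordinal} : a < b + 1 ↔ a ≤ b := by
  rw [Ordinal.add_one_eq_succ, Order.lt_succ_iff]

theorem restrict_snoc {x : Ordinal → Ordinal} (b : Ordinal) :
    restrictFn x (b + 1) = PreSeq.snoc (restrictFn x b) (x b) := by
  refine PreSeq.ext' rfl fun i => ?_
  simp only [PreSeq.snoc, restrictFn]
  rcases lt_trichotomy i b with h | h | h
  · rw [if_pos (h.trans (lt_succ' b)), if_pos h]; exact (if_pos h).symm
  · subst h
    rw [if_pos (lt_succ' i), if_neg (lt_irrefl i)]; exact ((if_neg (lt_irrefl i)).trans (if_pos rfl)).symm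
  · have h2 : ¬ i < b + 1 := fun hc => absurd (lt_succ_iff'.1 hc) (not_le.2 h)
    rw [if_neg h2, if_neg (not_lt.2 h.le)]; exact ((if_neg (not_lt.2 h.le)).trans (if_neg (ne_of_gt h))).symm

section Branch

variable (κ : Cardinal) (T : Set PreSeq) (W : Set Ordinal) (st : PreSeq)
  (hsplit : ∀ t ∈ T, PreSeq.Ext st t →
      ∃ c, IsClubIn c κ.ord ∧ ∀ α ∈ c, PreSeq.snoc t α ∈ T)
  (hW : IsStatIn W κ.ord)

open Classical in
noncomputable def branchBody (j : Ordinal) (prior : ∀ i, i < j → Ordinal) : Ordinal :=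
  if h : j < st.len then st.val j
  else if h2 : (⟨j, fun i => if hi : i < j then prior i hi else 0⟩ : PreSeq) ∈ T ∧
      PreSeq.Ext st ⟨j, fun i => if hi : i < j then prior i hi else 0⟩ then
    (hW _ (hsplit _ h2.1 h2.2).choose_spec.1).choose
  else 0

noncomputable def branchFn : Ordinal → Ordinal :=
  Ordinal.lt_wf.fix (C := fun _ => Ordinal) (branchBody κ T W st hsplit hW)

theorem branchFn_eq (j : Ordinal) :
    branchFn κ T W st hsplit hW j =
      branchBody κ T W st hsplit hW j (fun i _ => branchFn κ T W st hsplit hW i) :=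
  WellFounded.fix_eq _ _ j

theorem branchFn_stem {j : Ordinal} (h : j < st.len) :
    branchFn κ T W st hsplit hW j = st.val j := by
  rw [branchFn_eq, branchBody, dif_pos h]

theorem branchFn_restrict_eq (j : Ordinal) :
    (⟨j, fun i => if hi : i < j then branchFn κ T W st hsplit hW i else 0⟩ : PreSeq) =
      restrictFn (branchFn κ T W st hsplit hW) j := by
  refine PreSeq.ext' rfl fun i => ?_
  by_cases hi : i < j
  · simp only [restrictFn, dif_pos hi, if_pos hi]
  · simp only [restrictFn, dif_neg hi, if_neg hi]

theorem branchBody_spec (j : Ordinal) (prior : ∀ i, i < j → Ordinal)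
    (h : ¬ j < st.len)
    (h1 : (⟨j, fun i => if hi : i < j then prior i hi else 0⟩ : PreSeq) ∈ T)
    (h2 : PreSeq.Ext st ⟨j, fun i => if hi : i < j then prior i hi else 0⟩) :
    PreSeq.snoc (⟨j, fun i => if hi : i < j then prior i hi else 0⟩ : PreSeq)
        (branchBody κ T W st hsplit hW j prior) ∈ T ∧
      branchBody κ T W st hsplit hW j prior ∈ W := by
  rw [branchBody, dif_neg h, dif_pos ⟨h1, h2⟩]
  exact ⟨(hsplit _ h1 h2).choose_spec.2 _
      (hW _ (hsplit _ h1 h2).choose_spec.1).choose_spec.1,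
    (hW _ (hsplit _ h1 h2).choose_spec.1).choose_spec.2⟩

theorem branchFn_succ {j : Ordinal} (h : st.len ≤ j)
    (h1 : restrictFn (branchFn κ T W st hsplit hW) j ∈ T)
    (h2 : PreSeq.Ext st (restrictFn (branchFn κ T W st hsplit hW) j)) :
    PreSeq.snoc (restrictFn (branchFn κ T W st hsplit hW) j)
        (branchFn κ T W st hsplit hW j) ∈ T ∧
      branchFn κ T W st hsplit hW j ∈ W := by
  have hre := branchFn_restrict_eq κ T W st hsplit hW j
  have h1' := hre.symm ▸ h1
  have h2' := hre.symm ▸ h2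
  have hres := branchBody_spec κ T W st hsplit hW j
    (fun i _ => branchFn κ T W st hsplit hW i) (not_lt.2 h) h1' h2'
  rw [← branchFn_eq, hre] at hres
  exact hres

end Branch


theorem ext_snoc (t : PreSeq) (α : Ordinal) : PreSeq.Ext t (PreSeq.snoc t α) :=
  ⟨(lt_succ' _).le, fun i hi => (if_pos hi).symm⟩

theorem exists_good_branch (κ : Cardinal) (hlim : Order.IsSuccLimit κ.ord)
    (W : Set Ordinal) (hW : IsStatIn W κ.ord)
    (T : Set PreSeq) (hT : IsLaverTree κ T) :
    ∃ x : Ordinal → Ordinal, ∃ st ∈ T, st.len < κ.ord ∧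
      (∀ t ∈ T, PreSeq.Ext st t ∨ PreSeq.Ext t st) ∧
      (∀ t ∈ T, PreSeq.Ext st t →
        ∃ c, IsClubIn c κ.ord ∧ ∀ α ∈ c, PreSeq.snoc t α ∈ T) ∧
      (∀ a < κ.ord, restrictFn x a ∈ T) ∧
      (∀ a, st.len ≤ a → PreSeq.Ext st (restrictFn x a)) ∧
      (∀ j, st.len ≤ j → j < κ.ord → x j ∈ W) ∧
      IncrBelow κ x := by
  obtain ⟨hne, hnode, hrestr, hlimcl, st, hst, hcomp, hsplit⟩ := hT
  set x := branchFn κ T W st hsplit hW with hx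
  have L1 : ∀ i < st.len, x i = st.val i := fun i hi => branchFn_stem κ T W st hsplit hW hi
  have Lr : ∀ a ≤ st.len, restrictFn x a = restrictFn st.val a := by
    intro a ha
    refine PreSeq.ext' rfl fun i => ?_
    by_cases hi : i < a
    · simp only [restrictFn, if_pos hi]; exact L1 i (lt_of_lt_of_le hi ha)
    · simp only [restrictFn, if_neg hi]
  have L3 : ∀ a, st.len ≤ a → PreSeq.Ext st (restrictFn x a) := by
    intro a ha
    exact ⟨ha, fun i hi => by
      rw [restrict_val_lt (lt_of_lt_of_le hi ha)]; exact (L1 i hi).symm⟩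
  have M : ∀ a, a < κ.ord → restrictFn x a ∈ T := by
    intro a
    induction a using Ordinal.induction with
    | _ a IH =>
      intro ha
      rcases le_or_gt a st.len with hle | hgt
      · rw [Lr a hle]; exact hrestr st hst a hle
      · rcases Ordinal.zero_or_succ_or_isSuccLimit a with rfl | ⟨b, rfl⟩ | hlima
        · exact absurd hgt (by simp)
        · have hb : b < Order.succ b := Order.lt_succ b
          have hb' : b < κ.ord := hb.trans ha
          have hstb : st.len ≤ b := Order.lt_succ_iff.1 hgt
          have hmem := (branchFn_succ κ T W st hsplit hW hstb (IH b hb hb') (L3 b hstb)).1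
          rw [← restrict_snoc, Ordinal.add_one_eq_succ] at hmem
          exact hmem
        · exact hlimcl x a ha hlima (fun b hb => IH b hb (hb.trans ha))
  have MW : ∀ j, st.len ≤ j → j < κ.ord → x j ∈ W := fun j hj hjk =>
    (branchFn_succ κ T W st hsplit hW hj (M j hjk) (L3 j hj)).2
  have MI : IncrBelow κ x := by
    intro i j hij hj
    have hj1 : j + 1 < κ.ord := by
      rw [Ordinal.add_one_eq_succ]; exact hlim.succ_lt hj
    have hinc := (hnode _ (M _ hj1)).2.2
    have h2 := hinc i j hij (show j < j + 1 from lt_succ' j)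
    rwa [restrict_val_lt (hij.trans (lt_succ' j)), restrict_val_lt (lt_succ' j)] at h2
  exact ⟨x, st, hst, (hnode st hst).1, hcomp, hsplit, M, L3, MW, MI⟩


theorem subtree_laver (κ : Cardinal.{0}) (T : Set PreSeq)
    (hnode : ∀ s ∈ T, s.len < κ.ord ∧ s.Canonical ∧ s.Increasing)
    (hrestr : ∀ s ∈ T, ∀ a ≤ s.len, restrictFn s.val a ∈ T)
    (hlimcl : ∀ x : Ordinal → Ordinal, ∀ l, l < κ.ord → Order.IsSuccLimit l →
      (∀ a < l, restrictFn x a ∈ T) → restrictFn x l ∈ T)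
    (st : PreSeq)
    (hsplit : ∀ t ∈ T, PreSeq.Ext st t →
      ∃ c, IsClubIn c κ.ord ∧ ∀ α ∈ c, PreSeq.snoc t α ∈ T)
    (u : PreSeq) (hu : u ∈ T) (hstu : PreSeq.Ext st u) :
    IsLaverTree κ {s | s ∈ T ∧ (PreSeq.Ext s u ∨ PreSeq.Ext u s)} := by
  refine ⟨⟨u, hu, Or.inr (ext_refl u)⟩, fun s hs => hnode s hs.1, ?_, ?_, ?_⟩
  · rintro s ⟨hsT, hsu⟩ a ha
    refine ⟨hrestr s hsT a ha, ?_⟩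
    rcases hsu with h | h
    · exact Or.inl (ext_trans (restrict_restrict ha) h)
    · rcases le_total a u.len with h2 | h2
      · refine Or.inl ⟨h2, fun i hi => ?_⟩
        have hi' : i < a := hi
        rw [restrict_val_lt hi']
        exact (h.2 i (lt_of_lt_of_le hi' h2)).symm
      · refine Or.inr ⟨h2, fun i hi => ?_⟩
        rw [restrict_val_lt (lt_of_lt_of_le hi h2)]
        exact h.2 i hi
  · rintro y l hl hliml hall
    refine ⟨hlimcl y l hl hliml (fun b hb => (hall b hb).1), ?_⟩
    rcases le_or_gt l u.len with h2 | h2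
    · refine Or.inl ⟨h2, fun i hi => ?_⟩
      have hi' : i < l := hi
      have hb : i + 1 < l := by rw [Ordinal.add_one_eq_succ]; exact hliml.succ_lt hi'
      rcases (hall _ hb).2 with h3 | h3
      · have h4 := h3.2 i (show i < i + 1 from lt_succ' i)
        rw [restrict_val_lt (lt_succ' i)] at h4
        rw [restrict_val_lt hi']
        exact h4
      · exact absurd h3.1 (not_le.2 (lt_of_lt_of_le hb h2))
    · refine Or.inr ⟨h2.le, fun i hi => ?_⟩
      have hb : u.len + 1 < l := by rw [Ordinal.add_one_eq_succ]; exact hliml.succ_lt h2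
      rcases (hall _ hb).2 with h3 | h3
      · exact absurd h3.1 (not_le.2 (lt_succ' u.len))
      · have h4 := h3.2 i hi
        rw [restrict_val_lt (hi.trans (lt_succ' u.len))] at h4
        rw [restrict_val_lt (hi.trans h2)]
        exact h4
  · refine ⟨u, ⟨hu, Or.inr (ext_refl u)⟩, fun t ht => ht.2.symm, ?_⟩
    rintro t ⟨htT, -⟩ hut
    obtain ⟨c, hc, hsn⟩ := hsplit t htT (ext_trans hstu hut)
    exact ⟨c, hc, fun α hα => ⟨hsn α hα, Or.inr (ext_trans hut (ext_snoc t α))⟩⟩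

theorem full_tree_laver (κ : Cardinal.{0}) (hreg : κ.IsRegular) (hlim : Order.IsSuccLimit κ.ord) :
    IsLaverTree κ {s : PreSeq | s.len < κ.ord ∧ s.Canonical ∧ s.Increasing ∧
      ∀ i < s.len, s.val i < κ.ord} := by
  have he : (⟨0, fun _ => 0⟩ : PreSeq) ∈ {s : PreSeq | s.len < κ.ord ∧ s.Canonical ∧
      s.Increasing ∧ ∀ i < s.len, s.val i < κ.ord} :=
    ⟨hlim.pos, fun i _ => rfl, fun i j _ hj => absurd hj (by simp),
      fun i hi => absurd hi (by simp)⟩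
  refine ⟨⟨_, he⟩, fun s hs => ⟨hs.1, hs.2.1, hs.2.2.1⟩, ?_, ?_, ⟨0, fun _ => 0⟩, he,
    fun t _ => Or.inl ⟨by simp, fun i hi => absurd hi (by simp)⟩, ?_⟩
  · intro s hs a ha
    refine ⟨lt_of_le_of_lt ha hs.1, fun i hi => if_neg (not_lt.2 hi), fun i j hij hj => ?_,
      fun i hi => ?_⟩
    · have hj' : j < a := hj
      rw [restrict_val_lt (hij.trans hj'), restrict_val_lt hj']
      exact hs.2.2.1 i j hij (lt_of_lt_of_le hj' ha)
    · have hi' : i < a := hi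
      rw [restrict_val_lt hi']
      exact hs.2.2.2 i (lt_of_lt_of_le hi' ha)
  · intro y l hl hliml hall
    refine ⟨hl, fun i hi => if_neg (not_lt.2 hi), fun i j hij hj => ?_, fun i hi => ?_⟩
    · have hj' : j < l := hj
      have hj1 : j + 1 < l := by rw [Ordinal.add_one_eq_succ]; exact hliml.succ_lt hj'
      have h := (hall _ hj1).2.2.1 i j hij (show j < j + 1 from lt_succ' j)
      rw [restrict_val_lt (hij.trans (lt_succ' j)), restrict_val_lt (lt_succ' j)] at h
      rw [restrict_val_lt (hij.trans hj'), restrict_val_lt hj']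
      exact h
    · have hi' : i < l := hi
      have hi1 : i + 1 < l := by rw [Ordinal.add_one_eq_succ]; exact hliml.succ_lt hi'
      have h := (hall _ hi1).2.2.2 i (show i < i + 1 from lt_succ' i)
      rw [restrict_val_lt (lt_succ' i)] at h
      rw [restrict_val_lt hi']
      exact h
  · intro t ht _
    have hβ : Ordinal.bsup t.len (fun a _ => t.val a + 1) < κ.ord :=
      Cardinal.bsup_lt_ord_of_isRegular hreg (Cardinal.lt_ord.1 ht.1)
        (fun i hi => by rw [Ordinal.add_one_eq_succ]; exact hlim.succ_lt (ht.2.2.2 i hi))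
    have hbound : ∀ i < t.len, t.val i < Ordinal.bsup t.len (fun a _ => t.val a + 1) :=
      fun i hi => lt_of_lt_of_le (lt_succ' _) (Ordinal.le_bsup (fun a _ => t.val a + 1) i hi)
    refine ⟨{α | Ordinal.bsup t.len (fun a _ => t.val a + 1) ≤ α ∧ α < κ.ord},
      ⟨fun α hα => hα.2, ?_, ?_⟩, ?_⟩
    · intro l hl hliml hcof
      obtain ⟨b, hbc, -, hbl⟩ := hcof 0 hliml.pos
      exact ⟨hbc.1.trans hbl.le, hl⟩
    · intro a ha
      exact ⟨max a _, ⟨le_max_right a _, max_lt ha hβ⟩, le_max_left a _⟩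
    · rintro α ⟨hβα, hα⟩
      have hlen1 : t.len + 1 < κ.ord := by
        rw [Ordinal.add_one_eq_succ]; exact hlim.succ_lt ht.1
      refine ⟨hlen1, ?_, ?_, ?_⟩
      · intro i hi
        have hi' : t.len + 1 ≤ i := hi
        have h1 : ¬ i < t.len := not_lt.2 (((lt_succ' t.len).le).trans hi')
        have h2 : i ≠ t.len := fun h => absurd hi' (not_le.2 (h ▸ lt_succ' t.len))
        show (if i < t.len then t.val i else if i = t.len then α else 0) = 0
        rw [if_neg h1, if_neg h2]
      · intro i j hij hj
        have hj' : j ≤ t.len := lt_succ_iff'.1 hj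
        show (if i < t.len then t.val i else if i = t.len then α else 0) <
          (if j < t.len then t.val j else if j = t.len then α else 0)
        rcases lt_or_eq_of_le hj' with h | h
        · rw [if_pos (hij.trans h), if_pos h]
          exact ht.2.2.1 i j hij h
        · subst h
          rw [if_pos hij, if_neg (lt_irrefl _), if_pos rfl]
          exact (hbound i hij).trans_le hβα
      · intro i hi
        have hi' : i ≤ t.len := lt_succ_iff'.1 (show i < t.len + 1 from hi)
        show (if i < t.len then t.val i else if i = t.len then α else 0) < κ.ord
        rcases lt_or_eq_of_le hi' with h | h
        · rw [if_pos h]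
          exact ht.2.2.2 i h
        · subst h
          rw [if_neg (lt_irrefl _), if_pos rfl]
          exact hα

/-- (a) each `A_i` is Laver-null, (b) every κ-Laver tree has a branch in
`A = ⋃_{i<κ} A_i`, hence (c) `A` is not Laver-null: the κ-ideal generated by the
Laver-null sets is strictly larger than the family of Laver-null sets. -/
theorem laver_null_not_ideal (κ : Cardinal) (hreg : κ.IsRegular)
    (hunc : Cardinal.aleph0 < κ) (S : Set Ordinal) (hS : S ⊆ Set.Iio κ.ord)
    (hstat : IsStatIn S κ.ord) (hcostat : IsStatIn (Set.Iio κ.ord \ S) κ.ord) :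
    (∀ T, IsLaverTree κ T → ∀ i < κ.ord,
      ∃ T', IsLaverTree κ T' ∧ T' ⊆ T ∧ Branches κ T' ∩ ASet κ S i = ∅) ∧
    (∀ T, IsLaverTree κ T →
      ∃ x ∈ Branches κ T, x ∈ ⋃ i ∈ Set.Iio κ.ord, ASet κ S i) ∧
    ¬ (∀ T, IsLaverTree κ T → ∃ T', IsLaverTree κ T' ∧ T' ⊆ T ∧
        Branches κ T' ∩ (⋃ i ∈ Set.Iio κ.ord, ASet κ S i) = ∅) := by
  have hlim : Order.IsSuccLimit κ.ord := Cardinal.isSuccLimit_ord hunc.le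
  have partA : ∀ T, IsLaverTree κ T → ∀ i < κ.ord,
      ∃ T', IsLaverTree κ T' ∧ T' ⊆ T ∧ Branches κ T' ∩ ASet κ S i = ∅ := by
    intro T hT i hi
    obtain ⟨x, st, hst, hstlen, hcomp, hsplit, hbr, hExt, hval, hinc⟩ :=
      exists_good_branch κ hlim (Set.Iio κ.ord \ S) hcostat T hT
    have hij : i < max (i + 1) st.len := lt_of_lt_of_le (lt_succ' i) (le_max_left _ _)
    have hstj : st.len ≤ max (i + 1) st.len := le_max_right _ _
    have hjk : max (i + 1) st.len < κ.ord :=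
      max_lt (by rw [Ordinal.add_one_eq_succ]; exact hlim.succ_lt hi) hstlen
    have hj1 : max (i + 1) st.len + 1 < κ.ord := by
      rw [Ordinal.add_one_eq_succ]; exact hlim.succ_lt hjk
    have hu : restrictFn x (max (i + 1) st.len + 1) ∈ T := hbr _ hj1
    have hstu : PreSeq.Ext st (restrictFn x (max (i + 1) st.len + 1)) :=
      hExt _ (hstj.trans (lt_succ' _).le)
    have hT' := subtree_laver κ T hT.2.1 hT.2.2.1 hT.2.2.2.1 st hsplit _ hu hstu
    refine ⟨_, hT', fun s hs => hs.1, ?_⟩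
    rw [Set.eq_empty_iff_forall_notMem]
    rintro y ⟨hyB, hyinc, hyA⟩
    have hmem := hyB (max (i + 1) st.len + 1) hj1
    have hyj : y (max (i + 1) st.len) = x (max (i + 1) st.len) := by
      rcases hmem.2 with h | h
      · have h4 := h.2 (max (i + 1) st.len) (show _ < _ + 1 from lt_succ' _)
        rwa [restrict_val_lt (lt_succ' _), restrict_val_lt (lt_succ' _)] at h4
      · have h4 := h.2 (max (i + 1) st.len) (show _ < _ + 1 from lt_succ' _)
        rw [restrict_val_lt (lt_succ' _), restrict_val_lt (lt_succ' _)] at h4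
        exact h4.symm
    have hxjS : x (max (i + 1) st.len) ∉ S := (hval _ hstj hjk).2
    exact hxjS (hyj ▸ hyA _ hij hjk)
  have partB : ∀ T, IsLaverTree κ T →
      ∃ x ∈ Branches κ T, x ∈ ⋃ i ∈ Set.Iio κ.ord, ASet κ S i := by
    intro T hT
    obtain ⟨x, st, hst, hstlen, -, -, hbr, -, hval, hinc⟩ :=
      exists_good_branch κ hlim S hstat T hT
    exact ⟨x, hbr, Set.mem_biUnion hstlen ⟨hinc, fun j hj hjk => hval j hj.le hjk⟩⟩
  refine ⟨partA, partB, ?_⟩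
  intro hcon
  obtain ⟨T', hT', -, hdisj⟩ := hcon _ (full_tree_laver κ hreg hlim)
  obtain ⟨x, hx1, hx2⟩ := partB T' hT'
  rw [Set.eq_empty_iff_forall_notMem] at hdisj
  exact hdisj x ⟨hx1, hx2⟩
end
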